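/- Let σ₁, ε₁ be n×n real symmetric matrices, let σ₂ be an n×n real symmetric positive definite matrix, let ω ∈ ℝ, and let w, z ∈ ℂⁿ. Write M u · v := Σⱼ (Mu)ⱼ vⱼ and v̄ for componentwise conjugation. Then Re{σ₂ z · z̄ − (σ₁ − iωε₁) w · z̄ − (σ₁ + iωε₁) w̄ · z + σ₁ w · w̄} ≥ Re{(σ₁ − (σ₁ + iωε₁)σ₂⁻¹(σ₁ − iωε₁)) w · w̄}. -/

import Mathlib

open Matrix

lemma re_quad_nonneg (n : ℕ) (σ : Matrix (Fin n) (Fin n) ℝ)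
    (hpos : ∀ ξ : Fin n → ℝ, ξ ≠ 0 → 0 < (σ.mulVec ξ) ⬝ᵥ ξ) (v : Fin n → ℂ) :
    0 ≤ (((σ.map Complex.ofReal).mulVec v) ⬝ᵥ star v).re := by
  have hnn : ∀ ξ : Fin n → ℝ, 0 ≤ (σ.mulVec ξ) ⬝ᵥ ξ := by
    intro ξ
    by_cases h : ξ = 0
    · simp [h]
    · exact (hpos ξ h).le
  set a : Fin n → ℝ := fun i => (v i).re with ha
  set b : Fin n → ℝ := fun i => (v i).im with hb
  have key : (((σ.map Complex.ofReal).mulVec v) ⬝ᵥ star v).re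
      = (σ.mulVec a) ⬝ᵥ a + (σ.mulVec b) ⬝ᵥ b := by
    simp only [Matrix.mulVec, dotProduct, Matrix.map_apply, Pi.star_apply,
      Finset.sum_mul, Complex.re_sum, ← Finset.sum_add_distrib]
    refine Finset.sum_congr rfl fun i _ => ?_
    refine Finset.sum_congr rfl fun j _ => ?_
    simp [Complex.mul_re, Complex.ofReal_re, Complex.ofReal_im, ha, hb]
  rw [key]
  exact add_nonneg (hnn a) (hnn b)

/-- Completion-of-the-square inequality (2.4). -/
theorem stmt_9 (n : ℕ) (σ₁ ε₁ σ₂ : Matrix (Fin n) (Fin n) ℝ)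
    (hσ₁ : σ₁.IsSymm) (hε₁ : ε₁.IsSymm) (hσ₂sym : σ₂.IsSymm)
    (hσ₂pos : ∀ ξ : Fin n → ℝ, ξ ≠ 0 → 0 < (σ₂.mulVec ξ) ⬝ᵥ ξ)
    (ω : ℝ) (w z : Fin n → ℂ)
    (σ₁c σ₂c ε₁c : Matrix (Fin n) (Fin n) ℂ)
    (hσ₁c : σ₁c = σ₁.map Complex.ofReal) (hσ₂c : σ₂c = σ₂.map Complex.ofReal)
    (hε₁c : ε₁c = ε₁.map Complex.ofReal) :
    (((σ₁c - (σ₁c + (Complex.I * (ω : ℂ)) • ε₁c) * σ₂c⁻¹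
        * (σ₁c - (Complex.I * (ω : ℂ)) • ε₁c)).mulVec w) ⬝ᵥ star w).re
      ≤ ((σ₂c.mulVec z) ⬝ᵥ star z
          - ((σ₁c - (Complex.I * (ω : ℂ)) • ε₁c).mulVec w) ⬝ᵥ star z
          - ((σ₁c + (Complex.I * (ω : ℂ)) • ε₁c).mulVec (star w)) ⬝ᵥ z
          + (σ₁c.mulVec w) ⬝ᵥ star w).re := by
  set A := σ₁c - (Complex.I * (ω : ℂ)) • ε₁c with hA
  set B := σ₁c + (Complex.I * (ω : ℂ)) • ε₁c with hB
  -- positive definiteness & invertibility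
  have hpd : σ₂.PosDef := by
    refine Matrix.PosDef.of_dotProduct_mulVec_pos ?_ (fun x hx => ?_)
    · show σ₂ᴴ = σ₂
      ext i j
      simpa [Matrix.conjTranspose_apply] using congrFun (congrFun hσ₂sym i) j
    · simpa [dotProduct_comm] using hσ₂pos x hx
  have hdet : IsUnit σ₂c.det := by
    have h0 : σ₂.det ≠ 0 := ne_of_gt hpd.det_pos
    have hd : σ₂c.det = (σ₂.det : ℂ) := by
      rw [hσ₂c, show σ₂.map Complex.ofReal = Complex.ofRealHom.mapMatrix σ₂ from rfl,
        ← RingHom.map_det]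
      rfl
    rw [hd]
    simpa using h0
  have h1 : σ₂c * σ₂c⁻¹ = 1 := Matrix.mul_nonsing_inv _ hdet
  have h2 : σ₂c⁻¹ * σ₂c = 1 := Matrix.nonsing_inv_mul _ hdet
  -- symmetry facts
  have hσ₂cT : σ₂cᵀ = σ₂c := by
    rw [hσ₂c, ← Matrix.transpose_map, hσ₂sym]
  have hσ₂cinvT : (σ₂c⁻¹)ᵀ = σ₂c⁻¹ := by
    rw [Matrix.transpose_nonsing_inv, hσ₂cT]
  have hAT : Aᵀ = A := by
    rw [hA, Matrix.transpose_sub, Matrix.transpose_smul, hσ₁c, hε₁c,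
      ← Matrix.transpose_map, ← Matrix.transpose_map, hσ₁, hε₁]
  have hBT : Bᵀ = B := by
    rw [hB, Matrix.transpose_add, Matrix.transpose_smul, hσ₁c, hε₁c,
      ← Matrix.transpose_map, ← Matrix.transpose_map, hσ₁, hε₁]
  -- conjugation facts
  have hAmap : A.map (starRingEnd ℂ) = B := by
    ext i j
    simp [hA, hB, hσ₁c, hε₁c, Matrix.map_apply, Complex.conj_ofReal, _root_.map_mul,
      Complex.conj_I]
  have hSmap : σ₂c.map (starRingEnd ℂ) = σ₂c := by
    ext i j
    simp [hσ₂c, Matrix.map_apply, Complex.conj_ofReal]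
  have hSinvmap : (σ₂c⁻¹).map (starRingEnd ℂ) = σ₂c⁻¹ := by
    symm
    refine Matrix.inv_eq_left_inv ?_
    have h3 : ((σ₂c⁻¹).map (starRingEnd ℂ)) * (σ₂c.map (starRingEnd ℂ))
        = (σ₂c⁻¹ * σ₂c).map (starRingEnd ℂ) := (Matrix.map_mul (f := starRingEnd ℂ)).symm
    rw [hSmap] at h3
    rw [h3, h2, Matrix.map_one _ (map_zero _) (map_one _)]
  -- star mulVec
  have hstarMul : ∀ (M : Matrix (Fin n) (Fin n) ℂ) (x : Fin n → ℂ),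
      star (M *ᵥ x) = (M.map (starRingEnd ℂ)) *ᵥ star x := by
    intro M x
    funext i
    simp [Matrix.mulVec, dotProduct, Pi.star_apply, star_sum, Matrix.map_apply,
      mul_comm]
  -- swap lemma
  have hswap : ∀ (M : Matrix (Fin n) (Fin n) ℂ) (x y : Fin n → ℂ),
      x ⬝ᵥ (M *ᵥ y) = (Mᵀ *ᵥ x) ⬝ᵥ y := by
    intro M x y
    rw [Matrix.dotProduct_mulVec, Matrix.mulVec_transpose]
  set u : Fin n → ℂ := σ₂c⁻¹ *ᵥ (A *ᵥ w) with hu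
  have hAw : σ₂c *ᵥ u = A *ᵥ w := by
    rw [hu, Matrix.mulVec_mulVec, h1, Matrix.one_mulVec]
  have hstaru : star u = (σ₂c⁻¹ * B) *ᵥ star w := by
    rw [hu, hstarMul, hSinvmap, hstarMul, hAmap, Matrix.mulVec_mulVec]
  -- the four cross terms
  have e2 : (σ₂c *ᵥ z) ⬝ᵥ star u = (B *ᵥ star w) ⬝ᵥ z := by
    rw [hstaru, hswap, Matrix.mulVec_mulVec, Matrix.transpose_mul, hBT, hσ₂cinvT,
      Matrix.mul_assoc, h2, Matrix.mul_one]
    rw [dotProduct_comm (B *ᵥ z) (star w), hswap, hBT]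
  have e3 : (σ₂c *ᵥ u) ⬝ᵥ star z = (A *ᵥ w) ⬝ᵥ star z := by rw [hAw]
  have e4 : (σ₂c *ᵥ u) ⬝ᵥ star u = ((B * σ₂c⁻¹ * A) *ᵥ w) ⬝ᵥ star w := by
    rw [hAw, hstaru, hswap, Matrix.transpose_mul, hBT, hσ₂cinvT, Matrix.mulVec_mulVec]
  -- completion of square identity
  have hident : (σ₂c *ᵥ (z - u)) ⬝ᵥ star (z - u)
      = (σ₂c *ᵥ z) ⬝ᵥ star z - (A *ᵥ w) ⬝ᵥ star z - (B *ᵥ star w) ⬝ᵥ z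
        + ((B * σ₂c⁻¹ * A) *ᵥ w) ⬝ᵥ star w := by
    rw [Matrix.mulVec_sub, star_sub, sub_dotProduct, dotProduct_sub,
      dotProduct_sub, e2, e3, e4]
    ring
  -- nonnegativity
  have hnn : 0 ≤ ((σ₂c *ᵥ (z - u)) ⬝ᵥ star (z - u)).re := by
    rw [hσ₂c]
    exact re_quad_nonneg n σ₂ hσ₂pos (z - u)
  have hLHS : ((σ₁c - B * σ₂c⁻¹ * A) *ᵥ w) ⬝ᵥ star w
      = (σ₁c *ᵥ w) ⬝ᵥ star w - ((B * σ₂c⁻¹ * A) *ᵥ w) ⬝ᵥ star w := by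
    rw [Matrix.sub_mulVec, sub_dotProduct]
  rw [hLHS]
  have := hnn
  rw [hident] at this
  simp only [Complex.sub_re, Complex.add_re] at this ⊢
  linarith
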